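/- Let A be a connected locally finite graph whose universal covering tree T is a self-similar tree, and let Ā be a minimal covering quotient of T. If π, π' : A → Ā are two covering morphisms, then π₀ = π'₀, i.e. π and π' agree on vertices (but not necessarily on edges). -/

import Mathlib

/-- A rooted directed multigraph. -/
structure RGraph where
  V : Type
  E : Type
  s : E → V
  t : E → V
  root : V

namespace RGraph

/-- `l` is a path: consecutive edges are composable. -/
def IsPath (A : RGraph) (l : List A.E) : Prop :=
  l.Chain' (fun e f => A.t e = A.s f)

/-- `l` is a path starting at the vertex `q`. -/
def PathFrom (A : RGraph) (q : A.V) (l : List A.E) : Prop :=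
  A.IsPath l ∧ ∀ e ∈ l.head?, A.s e = q

/-- The target of the path `l` started at `q` (equal to `q` for the empty path). -/
def pathTarget (A : RGraph) (q : A.V) (l : List A.E) : A.V :=
  l.foldl (fun _ e => A.t e) q

@[simp] lemma pathTarget_nil (A : RGraph) (q : A.V) : A.pathTarget q [] = q := rfl

@[simp] lemma pathTarget_cons (A : RGraph) (q : A.V) (a : A.E) (l : List A.E) :
    A.pathTarget q (a :: l) = A.pathTarget (A.t a) l := rfl

lemma pathTarget_append (A : RGraph) (q : A.V) (l l' : List A.E) :
    A.pathTarget q (l ++ l') = A.pathTarget (A.pathTarget q l) l' := by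
  simp [pathTarget]

@[simp] lemma pathTarget_append_single (A : RGraph) (q : A.V) (l : List A.E) (e : A.E) :
    A.pathTarget q (l ++ [e]) = A.t e := by
  rw [pathTarget_append]; rfl

lemma pathFrom_nil (A : RGraph) (q : A.V) : A.PathFrom q [] :=
  ⟨List.isChain_nil, by simp⟩

lemma pathTarget_getLast {A : RGraph} {q : A.V} {l : List A.E} {x : A.E}
    (hx : x ∈ l.getLast?) : A.pathTarget q l = A.t x := by
  induction l generalizing q with
  | nil => simp at hx
  | cons a l ih =>
    cases l with
    | nil => simp at hx; subst hx; rfl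
    | cons b l =>
      rw [List.getLast?_cons_cons] at hx
      simpa using ih (q := A.t a) hx

lemma pathFrom_append_single {A : RGraph} {q : A.V} {l : List A.E} {e : A.E}
    (h : A.PathFrom q l) (he : A.s e = A.pathTarget q l) :
    A.PathFrom q (l ++ [e]) := by
  constructor
  · apply List.isChain_append.mpr
    refine ⟨h.1, List.isChain_singleton _, ?_⟩
    intro x hx y hy
    simp at hy
    subst hy
    rw [he]
    exact (pathTarget_getLast hx).symm
  · intro f hf
    cases l with
    | nil =>
      simp at hf
      subst hf
      simpa using he
    | cons a l =>
      simp at hf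
      subst hf
      exact h.2 a (by simp)

/-- `w` is reachable from `q` by an oriented path. -/
def Reach (A : RGraph) (q w : A.V) : Prop :=
  ∃ l, A.PathFrom q l ∧ A.pathTarget q l = w

lemma reach_self (A : RGraph) (q : A.V) : A.Reach q q :=
  ⟨[], A.pathFrom_nil q, rfl⟩

lemma reach_target {A : RGraph} {q : A.V} {e : A.E} (h : A.Reach q (A.s e)) :
    A.Reach q (A.t e) := by
  obtain ⟨l, hl, ht⟩ := h
  exact ⟨l ++ [e], pathFrom_append_single hl ht.symm, by simp⟩

/-- A graph is connected (as a rooted directed graph) if every vertex is reachable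
from the root. -/
def Connected (A : RGraph) : Prop := ∀ w : A.V, A.Reach A.root w

/-- A graph is a tree if the target map from paths emanating from the root to
vertices is a bijection. -/
def IsTree (A : RGraph) : Prop :=
  Function.Bijective
    (fun l : {l : List A.E // A.PathFrom A.root l} => A.pathTarget A.root l.1)

/-- A graph is locally finite if every vertex has finitely many outgoing edges. -/
def LocallyFinite (A : RGraph) : Prop := ∀ q : A.V, Finite {e : A.E // A.s e = q}

/-- Adjacency: there is an edge from `v` to `w`. -/
def Adj (A : RGraph) (v w : A.V) : Prop := ∃ e, A.s e = v ∧ A.t e = w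

/-- The induced rooted subgraph on all vertices reachable from `q` (the "cone" at `q`). -/
def subgraph (A : RGraph) (q : A.V) : RGraph where
  V := {w // A.Reach q w}
  E := {e // A.Reach q (A.s e)}
  s := fun e => ⟨A.s e.1, e.2⟩
  t := fun e => ⟨A.t e.1, reach_target e.2⟩
  root := ⟨q, A.reach_self q⟩

/-- The truncation of the cone at `v` to vertices at distance at most `d` from `v`. -/
def trunc (A : RGraph) (v : A.V) (d : ℕ) : RGraph where
  V := {w // ∃ l, A.PathFrom v l ∧ A.pathTarget v l = w ∧ l.length ≤ d}
  E := {e // ∃ l, A.PathFrom v l ∧ A.pathTarget v l = A.s e ∧ l.length < d}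
  s := fun e => ⟨A.s e.1, e.2.imp fun _ h => ⟨h.1, h.2.1, h.2.2.le⟩⟩
  t := fun e => ⟨A.t e.1, by
    obtain ⟨l, h1, h2, h3⟩ := e.2
    exact ⟨l ++ [e.1], pathFrom_append_single h1 h2.symm, by simp,
      by simp only [List.length_append, List.length_singleton]; omega⟩⟩
  root := ⟨v, [], A.pathFrom_nil v, rfl, Nat.zero_le d⟩

/-- The universal covering tree of `A`: vertices are the paths emanating from the root. -/
def cover (A : RGraph) : RGraph where
  V := {l : List A.E // A.PathFrom A.root l}
  E := {x : {l : List A.E // A.PathFrom A.root l} × A.E //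
          A.s x.2 = A.pathTarget A.root x.1.1}
  s := fun x => x.1.1
  t := fun x => ⟨x.1.1.1 ++ [x.1.2], pathFrom_append_single x.1.1.2 x.2⟩
  root := ⟨[], A.pathFrom_nil _⟩

end RGraph

/-- A morphism of rooted directed multigraphs. -/
structure GraphHom (A B : RGraph) where
  v : A.V → B.V
  e : A.E → B.E
  root_eq : v A.root = B.root
  s_eq : ∀ x, B.s (e x) = v (A.s x)
  t_eq : ∀ x, B.t (e x) = v (A.t x)

namespace GraphHom

variable {A B : RGraph}

/-- The unique path lifting property. -/
def UPLP (p : GraphHom A B) : Prop :=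
  ∀ (q : A.V) (l' : List B.E), B.PathFrom (p.v q) l' →
    ∃! l : List A.E, A.PathFrom q l ∧ l.map p.e = l'

/-- A covering morphism: surjective on vertices, with the unique path lifting property. -/
def IsCovering (p : GraphHom A B) : Prop := Function.Surjective p.v ∧ p.UPLP

/-- An isomorphism of graphs: bijective on vertices and on edges. -/
def IsIso (p : GraphHom A B) : Prop := Function.Bijective p.v ∧ Function.Bijective p.e

/-- The restriction of the edge map to the edges emanating from `q`. -/
def outMap (p : GraphHom A B) (q : A.V) :
    {e : A.E // A.s e = q} → {e' : B.E // B.s e' = p.v q} :=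
  fun e => ⟨p.e e.1, by rw [p.s_eq, e.2]⟩

lemma isPath_map (p : GraphHom A B) {l : List A.E} (h : A.IsPath l) :
    B.IsPath (l.map p.e) := by
  rw [RGraph.IsPath, List.Chain', List.isChain_map]
  exact List.IsChain.imp (fun a b hab => by rw [p.t_eq, p.s_eq, hab]) h

lemma pathFrom_map (p : GraphHom A B) {q : A.V} {l : List A.E} (h : A.PathFrom q l) :
    B.PathFrom (p.v q) (l.map p.e) := by
  refine ⟨p.isPath_map h.1, ?_⟩
  intro f hf
  cases l with
  | nil => simp at hf
  | cons a l =>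
    simp at hf
    subst hf
    rw [p.s_eq, h.2 a (by simp)]

lemma pathTarget_map (p : GraphHom A B) (q : A.V) (l : List A.E) :
    B.pathTarget (p.v q) (l.map p.e) = p.v (A.pathTarget q l) := by
  induction l generalizing q with
  | nil => rfl
  | cons a l ih =>
    show B.pathTarget (B.t (p.e a)) (l.map p.e) = _
    rw [p.t_eq]
    exact ih (A.t a)

lemma reach_map (p : GraphHom A B) {q w : A.V} (h : A.Reach q w) :
    B.Reach (p.v q) (p.v w) := by
  obtain ⟨l, hl, ht⟩ := h
  exact ⟨l.map p.e, p.pathFrom_map hl, by rw [p.pathTarget_map, ht]⟩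

end GraphHom

/-- Two graphs are isomorphic. -/
def RGraph.Iso (A B : RGraph) : Prop := ∃ p : GraphHom A B, p.IsIso

/-- The universal covering morphism from the universal covering tree of `A` to `A`. -/
def RGraph.uCover (A : RGraph) : GraphHom A.cover A where
  v := fun l => A.pathTarget A.root l.1
  e := fun x => x.1.2
  root_eq := rfl
  s_eq := fun x => x.2
  t_eq := fun x => by
    show A.t x.1.2 = A.pathTarget A.root (x.1.1.1 ++ [x.1.2])
    simp

/-- The morphism induced between universal covering trees by a morphism of graphs. -/
def GraphHom.coverMap {A B : RGraph} (p : GraphHom A B) : GraphHom A.cover B.cover where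
  v := fun l => ⟨l.1.map p.e, by have := p.pathFrom_map l.2; rwa [p.root_eq] at this⟩
  e := fun x =>
    ⟨(⟨x.1.1.1.map p.e, by have := p.pathFrom_map x.1.1.2; rwa [p.root_eq] at this⟩,
      p.e x.1.2), by
        show B.s (p.e x.1.2) = B.pathTarget B.root (x.1.1.1.map p.e)
        rw [p.s_eq, x.2, ← p.root_eq, p.pathTarget_map]⟩
  root_eq := Subtype.ext rfl
  s_eq := fun _ => rfl
  t_eq := fun x => by
    apply Subtype.ext
    simp [RGraph.cover]

/-- `A` is a covering quotient of `T`. -/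
def IsCovQuotient (T A : RGraph) : Prop := ∃ p : GraphHom T A, p.IsCovering

/-- `A` is a minimal covering quotient of `T`: a covering quotient with the minimal
number of vertices among all covering quotients of `T`. -/
def IsMinCovQuotient (T A : RGraph) : Prop :=
  IsCovQuotient T A ∧
    ∀ B : RGraph, IsCovQuotient T B → Cardinal.mk A.V ≤ Cardinal.mk B.V

/-- `T` has finitely many cone types. -/
def FinManyCones (T : RGraph) : Prop :=
  ∃ S : Set T.V, S.Finite ∧ ∀ v : T.V, ∃ w ∈ S, RGraph.Iso (T.subgraph v) (T.subgraph w)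

/-- A self-similar tree: a locally finite tree with finitely many cone types. -/
def SelfSimilarTree (T : RGraph) : Prop := T.IsTree ∧ T.LocallyFinite ∧ FinManyCones T

namespace RGraph

/-- The automorphism group of a graph, realized as the group of root-preserving,
adjacency-preserving permutations of the vertex set (for trees this is the same as the
automorphism group in the sense of graph morphisms, since in a tree an edge is determined
by its endpoints). -/
def autGroup (T : RGraph) : Subgroup (Equiv.Perm T.V) where
  carrier := {g | g T.root = T.root ∧ ∀ v w, T.Adj v w ↔ T.Adj (g v) (g w)}
  one_mem' := ⟨rfl, fun _ _ => Iff.rfl⟩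
  mul_mem' := by
    rintro a b ⟨ha1, ha2⟩ ⟨hb1, hb2⟩
    refine ⟨?_, fun v w => ?_⟩
    · show a (b T.root) = T.root
      rw [hb1, ha1]
    · exact (hb2 v w).trans (ha2 (b v) (b w))
  inv_mem' := by
    rintro a ⟨ha1, ha2⟩
    refine ⟨?_, fun v w => ?_⟩
    · show a.symm T.root = T.root
      rw [Equiv.symm_apply_eq]
      exact ha1.symm
    · have h := ha2 (a⁻¹ v) (a⁻¹ w)
      simpa using h.symm

/-- The subgroup of permutations of the vertices fixing every vertex outside
of the cone at `v`. -/
def fixOutside (T : RGraph) (v : T.V) : Subgroup (Equiv.Perm T.V) where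
  carrier := {g | ∀ w, ¬ T.Reach v w → g w = w}
  one_mem' := fun _ _ => rfl
  mul_mem' := by
    intro a b ha hb w hw
    show a (b w) = w
    rw [hb w hw, ha w hw]
  inv_mem' := by
    intro a ha w hw
    show a.symm w = w
    rw [Equiv.symm_apply_eq]
    exact (ha w hw).symm

/-- The rigid stabilizer of the vertex `v`: automorphisms fixing every vertex
outside the subtree spanned by `v` and its descendants. -/
def rist (T : RGraph) (v : T.V) : Subgroup (Equiv.Perm T.V) :=
  T.autGroup ⊓ T.fixOutside v

/-- The set of vertices at distance `n` from the root. -/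
def level (T : RGraph) (n : ℕ) : Set T.V :=
  {v | ∃ l : List T.E, T.PathFrom T.root l ∧ T.pathTarget T.root l = v ∧ l.length = n}

/-- The `n`-th rigid level stabilizer: the subgroup generated by the rigid stabilizers
of the vertices at distance `n` from the root. -/
def ristLevel (T : RGraph) (n : ℕ) : Subgroup (Equiv.Perm T.V) :=
  ⨆ v ∈ T.level n, T.rist v

/-- The `n`-th rigid level stabilizer, as a subgroup of the automorphism group. -/
def ristIn (T : RGraph) (n : ℕ) : Subgroup ↥T.autGroup :=
  (T.ristLevel n).comap T.autGroup.subtype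

end RGraph

/-- A recurrent double edge: a pair of distinct parallel edges such that there is an
oriented loop which contains one of them, or from which their common source can be
reached. -/
def HasRecDoubleEdge (A : RGraph) : Prop :=
  ∃ e₁ e₂ : A.E, e₁ ≠ e₂ ∧ A.s e₁ = A.s e₂ ∧ A.t e₁ = A.t e₂ ∧
    ((∃ (q : A.V) (l : List A.E),
        A.PathFrom q l ∧ l ≠ [] ∧ A.pathTarget q l = q ∧ (e₁ ∈ l ∨ e₂ ∈ l)) ∨
     (∃ (q : A.V) (l : List A.E),
        A.PathFrom q l ∧ l ≠ [] ∧ A.pathTarget q l = q ∧ A.Reach q (A.s e₁)))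

/-- A deterministic finite automaton over the alphabet `A`, with a partial transition
function, a single initial state, and all states accepting. -/
structure PDFA (A : Type) where
  Q : Type
  finQ : Finite Q
  neQ : Nonempty Q
  δ : Q → A → Option Q
  init : Q

namespace PDFA

variable {A : Type} (M : PDFA A)

/-- Running the automaton from state `q` on a word; `none` if it gets stuck. -/
def run : M.Q → List A → Option M.Q
  | q, [] => some q
  | q, a :: w => (M.δ q a).bind fun q' => run q' w

/-- The regular language accepted by `M`. -/
def Lang : Set (List A) := {w | (M.run M.init w).isSome}

lemma run_append (q : M.Q) (u w : List A) :
    M.run q (u ++ w) = (M.run q u).bind fun q' => M.run q' w := by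
  induction u generalizing q with
  | nil => simp [run]
  | cons a u ih =>
    simp only [List.cons_append, run]
    cases M.δ q a with
    | none => simp
    | some q' => simp [ih]

lemma isSome_of_append {q : M.Q} {u w : List A}
    (h : (M.run q (u ++ w)).isSome) : (M.run q u).isSome := by
  rw [run_append] at h
  cases hu : M.run q u with
  | none => rw [hu] at h; simp at h
  | some q' => simp

/-- The path language tree of `M`: the tree whose vertices are the words of the
language of `M`, with an edge from `w` to `w ++ [a]` whenever both belong to the
language. -/
def pathTree : RGraph where
  V := {w : List A // (M.run M.init w).isSome}
  E := {x : List A × A // (M.run M.init (x.1 ++ [x.2])).isSome}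
  s := fun x => ⟨x.1.1, M.isSome_of_append x.2⟩
  t := fun x => ⟨x.1.1 ++ [x.1.2], x.2⟩
  root := ⟨[], by simp [run]⟩

/-- The underlying rooted directed multigraph of the automaton `M`. -/
def underlying : RGraph where
  V := M.Q
  E := {x : M.Q × A // (M.δ x.1 x.2).isSome}
  s := fun x => x.1.1
  t := fun x => (M.δ x.1.1 x.1.2).get x.2
  root := M.init

/-- `M` is geometrically minimal: it has the minimal number of states among all DFAs
(over arbitrary finite nonempty alphabets) whose path language trees are isomorphic,
as unlabelled rooted trees, to the path language tree of `M`. -/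
def GeomMinimal : Prop :=
  ∀ (B : Type), Finite B → Nonempty B → ∀ N : PDFA B,
    RGraph.Iso M.pathTree N.pathTree → Nat.card M.Q ≤ Nat.card N.Q

/-- The state reached after reading the word `w` of the language. -/
def qstate (w : List A) (h : (M.run M.init w).isSome) : M.Q :=
  (M.run M.init w).get h

/-- The group of admissible permutations at the state `q`: permutations `τ` of the
alphabet fixing the letters outside `Σ(q)` and satisfying `δ(q, τ a) = δ(q, a)`. -/
def SymQ (q : M.Q) : Subgroup (Equiv.Perm A) where
  carrier := {τ | ∀ a, M.δ q (τ a) = M.δ q a ∧ (M.δ q a = none → τ a = a)}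
  one_mem' := fun _ => ⟨rfl, fun _ => rfl⟩
  mul_mem' := by
    intro τ₁ τ₂ h1 h2 a
    constructor
    · show M.δ q (τ₁ (τ₂ a)) = M.δ q a
      rw [(h1 (τ₂ a)).1, (h2 a).1]
    · intro hn
      show τ₁ (τ₂ a) = a
      rw [(h2 a).2 hn, (h1 a).2 hn]
  inv_mem' := by
    intro τ h a
    have h1 := (h (τ.symm a)).1
    rw [Equiv.apply_symm_apply] at h1
    constructor
    · show M.δ q (τ.symm a) = M.δ q a
      exact h1.symm
    · intro hn
      have h2 := (h (τ.symm a)).2 (h1.symm.trans hn)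
      rw [Equiv.apply_symm_apply] at h2
      show τ.symm a = a
      exact h2.symm

end PDFA

/-- Extending a portrait to a map on words (the first argument is the accumulated
prefix): the `i`-th letter of the image word is the image of the `i`-th letter under
the local injection at the prefix of length `i - 1`. -/
def portraitExtend {A : Type} (σ : List A → A → A) : List A → List A → List A
  | _, [] => []
  | pre, a :: w => σ pre a :: portraitExtend σ (pre ++ [a]) w

/-! ### Auxiliary material for Statement 10 -/

namespace RGraph

lemma pathFrom_cons {A : RGraph} {q : A.V} {e : A.E} {l : List A.E}
    (h : A.PathFrom q (e :: l)) : A.s e = q ∧ A.PathFrom (A.t e) l := by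
  obtain ⟨hc, hh⟩ := h
  rw [RGraph.IsPath, List.Chain', List.isChain_cons] at hc
  exact ⟨hh e rfl, hc.2, fun f hf => (hc.1 f hf).symm⟩

lemma pathFrom_cons' {A : RGraph} {q : A.V} {e : A.E} {l : List A.E}
    (hse : A.s e = q) (h : A.PathFrom (A.t e) l) : A.PathFrom q (e :: l) := by
  refine ⟨?_, ?_⟩
  · rw [RGraph.IsPath, List.Chain', List.isChain_cons]
    exact ⟨fun y hy => (h.2 y hy).symm, h.1⟩
  · intro f hf
    have : f = e := by simpa using hf.symm
    subst this; exact hse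

lemma reach_of_eq {A : RGraph} {q w : A.V} (h : q = w) : A.Reach q w := by
  subst h; exact A.reach_self q

lemma reach_pathFrom {A : RGraph} : ∀ (l : List A.E) {q w : A.V}, A.Reach q w →
    A.PathFrom w l → A.Reach q (A.pathTarget w l)
  | [], _, _, h1, _ => h1
  | e :: l, q, w, h1, hl => by
    obtain ⟨hse, hl'⟩ := pathFrom_cons hl
    exact reach_pathFrom l (A.reach_target (hse ▸ h1)) hl'

lemma reach_trans {A : RGraph} {q w u : A.V} (h1 : A.Reach q w) (h2 : A.Reach w u) :
    A.Reach q u := by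
  obtain ⟨l, hl, ht⟩ := h2
  exact ht ▸ reach_pathFrom l h1 hl

lemma reach_subgraph_aux {A : RGraph} {v : A.V} : ∀ (l : List A.E) {a : A.V}
    (ha : A.Reach v a), A.PathFrom a l → ∀ (hu : A.Reach v (A.pathTarget a l)),
    (A.subgraph v).Reach ⟨a, ha⟩ ⟨A.pathTarget a l, hu⟩
  | [], _, ha, _, _ => (A.subgraph v).reach_self _
  | e :: l, a, ha, hl, hu => by
    obtain ⟨hse, hl'⟩ := pathFrom_cons hl
    have hre : A.Reach v (A.s e) := hse ▸ ha
    have hte : A.Reach v (A.t e) := A.reach_target hre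
    have step0 : (A.subgraph v).Reach ⟨a, ha⟩ ((A.subgraph v).s ⟨e, hre⟩) := by
      rw [show (A.subgraph v).s ⟨e, hre⟩ = (⟨a, ha⟩ : (A.subgraph v).V) from Subtype.ext hse]
      exact (A.subgraph v).reach_self _
    exact reach_trans ((A.subgraph v).reach_target step0)
      (reach_subgraph_aux l hte hl' hu)

/-- Lift reachability into a cone subgraph. -/
lemma reach_subgraph {A : RGraph} {v a u : A.V} (ha : A.Reach v a) (h : A.Reach a u)
    (hu : A.Reach v u) : (A.subgraph v).Reach ⟨a, ha⟩ ⟨u, hu⟩ := by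
  obtain ⟨l, hl, ht⟩ := h
  subst ht
  exact reach_subgraph_aux l ha hl hu

lemma reach_of_subgraph_aux {A : RGraph} {v : A.V} : ∀ (l : List (A.subgraph v).E)
    (x : (A.subgraph v).V), (A.subgraph v).PathFrom x l →
    A.Reach x.1 ((A.subgraph v).pathTarget x l).1
  | [], _, _ => A.reach_self _
  | e :: l, x, hl => by
    obtain ⟨hse, hl'⟩ := pathFrom_cons hl
    have h1 : A.s e.1 = x.1 := congrArg Subtype.val hse
    refine reach_trans (A.reach_target (e := e.1) ?_) (reach_of_subgraph_aux l _ hl')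
    rw [h1]; exact A.reach_self x.1

/-- Project reachability from a cone subgraph. -/
lemma reach_of_subgraph {A : RGraph} {v : A.V} {x y : (A.subgraph v).V}
    (h : (A.subgraph v).Reach x y) : A.Reach x.1 y.1 := by
  obtain ⟨l, hl, ht⟩ := h
  exact ht ▸ reach_of_subgraph_aux l x hl

end RGraph

namespace GraphHom

variable {A B C : RGraph}

/-- Composition of graph morphisms. -/
def comp (p : GraphHom B C) (q : GraphHom A B) : GraphHom A C where
  v := fun a => p.v (q.v a)
  e := fun x => p.e (q.e x)
  root_eq := by show p.v (q.v A.root) = C.root; rw [q.root_eq, p.root_eq]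
  s_eq := fun x => by rw [p.s_eq, q.s_eq]
  t_eq := fun x => by rw [p.t_eq, q.t_eq]

/-- Local bijectivity of a morphism. -/
def LocBij (p : GraphHom A B) : Prop := ∀ q : A.V, Function.Bijective (p.outMap q)

lemma lift_exists (p : GraphHom A B) (hs : ∀ q : A.V, Function.Surjective (p.outMap q))
    (q : A.V) (l' : List B.E) (h : B.PathFrom (p.v q) l') :
    ∃ l : List A.E, A.PathFrom q l ∧ l.map p.e = l' := by
  induction l' generalizing q with
  | nil => exact ⟨[], A.pathFrom_nil q, rfl⟩
  | cons e' l' ih =>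
    obtain ⟨hse, hl'⟩ := RGraph.pathFrom_cons h
    obtain ⟨⟨e, he⟩, hee⟩ := hs q ⟨e', hse⟩
    have hee' : p.e e = e' := congrArg Subtype.val hee
    have hte : B.PathFrom (p.v (A.t e)) l' := by
      rw [← p.t_eq, hee']; exact hl'
    obtain ⟨l, hl, hml⟩ := ih (A.t e) hte
    exact ⟨e :: l, RGraph.pathFrom_cons' he hl, by simp [hee', hml]⟩

lemma lift_unique (p : GraphHom A B) (hi : ∀ q : A.V, Function.Injective (p.outMap q))
    {q : A.V} {l₁ l₂ : List A.E} (h₁ : A.PathFrom q l₁) (h₂ : A.PathFrom q l₂)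
    (hm : l₁.map p.e = l₂.map p.e) : l₁ = l₂ := by
  induction l₁ generalizing q l₂ with
  | nil => cases l₂ <;> simp_all
  | cons e₁ t₁ ih =>
    cases l₂ with
    | nil => simp at hm
    | cons e₂ t₂ =>
      simp only [List.map_cons, List.cons.injEq] at hm
      obtain ⟨hs₁, ht₁⟩ := RGraph.pathFrom_cons h₁
      obtain ⟨hs₂, ht₂⟩ := RGraph.pathFrom_cons h₂
      have he : e₁ = e₂ := by
        have h3 : p.outMap q ⟨e₁, hs₁⟩ = p.outMap q ⟨e₂, hs₂⟩ := Subtype.ext hm.1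
        exact congrArg Subtype.val (hi q h3)
      subst he
      exact congrArg _ (ih ht₁ ht₂ hm.2)

lemma locBij_uplp {p : GraphHom A B} (h : p.LocBij) : p.UPLP := by
  intro q l' hl'
  obtain ⟨l, hl, hm⟩ := p.lift_exists (fun q => (h q).2) q l' hl'
  refine ⟨l, ⟨hl, hm⟩, ?_⟩
  rintro l₂ ⟨hl₂, hm₂⟩
  exact p.lift_unique (fun q => (h q).1) hl₂ hl (hm₂.trans hm.symm)

lemma pathFrom_singleton {A : RGraph} {q : A.V} {e : A.E} (he : A.s e = q) :
    A.PathFrom q [e] := by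
  refine ⟨List.isChain_singleton _, ?_⟩
  intro f hf
  have : f = e := by simpa using hf.symm
  subst this; exact he

lemma uplp_locBij {p : GraphHom A B} (h : p.UPLP) : p.LocBij := by
  intro q
  constructor
  · rintro ⟨e₁, h₁⟩ ⟨e₂, h₂⟩ he
    have hpe : p.e e₁ = p.e e₂ := congrArg Subtype.val he
    have hpath : B.PathFrom (p.v q) [p.e e₁] :=
      pathFrom_singleton (by rw [p.s_eq, h₁])
    obtain ⟨l, -, hu⟩ := h q [p.e e₁] hpath
    have hu₁ : [e₁] = l := hu [e₁] ⟨pathFrom_singleton h₁, by simp⟩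
    have hu₂ : [e₂] = l := hu [e₂] ⟨pathFrom_singleton h₂, by simp [hpe]⟩
    have : e₁ = e₂ := by
      have h4 := hu₁.trans hu₂.symm
      simpa using h4
    exact Subtype.ext this
  · rintro ⟨e', he'⟩
    have hpath : B.PathFrom (p.v q) [e'] := pathFrom_singleton he'
    obtain ⟨l, ⟨hl, hm⟩, -⟩ := h q [e'] hpath
    match l, hm with
    | [e], hm =>
      have hpe : p.e e = e' := by simpa using hm
      have hse : A.s e = q := (RGraph.pathFrom_cons hl).1
      exact ⟨⟨e, hse⟩, Subtype.ext hpe⟩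

lemma isCovering_iff {p : GraphHom A B} :
    p.IsCovering ↔ Function.Surjective p.v ∧ p.LocBij :=
  ⟨fun h => ⟨h.1, uplp_locBij h.2⟩, fun h => ⟨h.1, locBij_uplp h.2⟩⟩

lemma comp_isCovering {p : GraphHom B C} {q : GraphHom A B}
    (hp : p.IsCovering) (hq : q.IsCovering) : (p.comp q).IsCovering := by
  rw [isCovering_iff] at *
  refine ⟨hp.1.comp hq.1, fun a => ?_⟩
  have hb : Function.Bijective fun x =>
      (p.outMap (q.v a)) ((q.outMap a) x) := (hp.2 (q.v a)).comp (hq.2 a)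
  constructor
  · intro x y hxy
    exact hb.1 (Subtype.ext (congrArg Subtype.val hxy))
  · intro y
    obtain ⟨x, hx⟩ := hb.2 ⟨y.1, y.2⟩
    exact ⟨x, Subtype.ext (congrArg Subtype.val hx)⟩

/-- An isomorphism is locally bijective. -/
lemma IsIso.locBij {p : GraphHom A B} (h : p.IsIso) : p.LocBij := by
  intro q
  constructor
  · rintro x y hxy
    exact Subtype.ext (h.2.1 (congrArg Subtype.val hxy))
  · rintro ⟨e', he'⟩
    obtain ⟨x, hx⟩ := h.2.2 e'
    have hsx : A.s x = q := by
      apply h.1.1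
      rw [← p.s_eq, hx, he']
    exact ⟨⟨x, hsx⟩, Subtype.ext hx⟩

/-- Reflect reachability along an isomorphism. -/
lemma IsIso.reach_reflect {p : GraphHom A B} (h : p.IsIso) {x y : A.V}
    (hr : B.Reach (p.v x) (p.v y)) : A.Reach x y := by
  obtain ⟨l', hl', ht'⟩ := hr
  obtain ⟨l, hl, hm⟩ := p.lift_exists (fun q => (h.locBij q).2) x l' hl'
  refine ⟨l, hl, h.1.1 ?_⟩
  rw [← p.pathTarget_map, hm]
  exact ht'

end GraphHom

/-- A bisimulation on the vertices of a graph. -/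
def IsBisim (B : RGraph) (R : B.V → B.V → Prop) : Prop :=
  ∀ ⦃b b' : B.V⦄, R b b' →
    ∃ σ : {e : B.E // B.s e = b} ≃ {e : B.E // B.s e = b'},
      ∀ e, R (B.t e.1) (B.t (σ e).1)

lemma isBisim_eqvGen {B : RGraph} {R : B.V → B.V → Prop} (h : IsBisim B R) :
    IsBisim B (Relation.EqvGen R) := by
  intro b b' hbb
  induction hbb with
  | rel a c hac =>
    obtain ⟨σ, hσ⟩ := h hac
    exact ⟨σ, fun e => Relation.EqvGen.rel _ _ (hσ e)⟩
  | refl a => exact ⟨Equiv.refl _, fun e => Relation.EqvGen.refl _⟩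
  | symm a c hac ih =>
    obtain ⟨σ, hσ⟩ := ih
    refine ⟨σ.symm, fun e => ?_⟩
    have h5 := hσ (σ.symm e)
    rw [Equiv.apply_symm_apply] at h5
    exact Relation.EqvGen.symm _ _ h5
  | trans a c d hac hcd ih1 ih2 =>
    obtain ⟨σ1, hσ1⟩ := ih1
    obtain ⟨σ2, hσ2⟩ := ih2
    exact ⟨σ1.trans σ2, fun e => Relation.EqvGen.trans _ _ _ (hσ1 e) (hσ2 (σ1 e))⟩

section QuotGraph

variable (B : RGraph) (st : Setoid B.V)

/-- The quotient of a graph by a bisimulation equivalence. -/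
noncomputable def quotGraph : RGraph where
  V := Quotient st
  E := {e : B.E // (Quotient.mk st (B.s e)).out = B.s e}
  s := fun e => Quotient.mk st (B.s e.1)
  t := fun e => Quotient.mk st (B.t e.1)
  root := Quotient.mk st B.root

variable {B st} (h : IsBisim B st.r)

/-- Choice of out-edge correspondences with the class representatives. -/
noncomputable def bisimEquiv (b : B.V) :
    {σ : {e : B.E // B.s e = b} ≃ {e : B.E // B.s e = (Quotient.mk st b).out} //
      ∀ e, st.r (B.t e.1) (B.t (σ.1 e).1)} := by
  have hb : st.r b (Quotient.mk st b).out := Setoid.symm (Quotient.mk_out b)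
  exact ⟨(h hb).choose, (h hb).choose_spec⟩

lemma quot_out_out (b : B.V) :
    (Quotient.mk st (Quotient.mk st b).out).out = (Quotient.mk st b).out := by
  rw [Quotient.out_eq]

/-- The covering morphism onto the quotient graph. -/
noncomputable def quotHom : GraphHom B (quotGraph B st) where
  v := Quotient.mk st
  e := fun x => ⟨((bisimEquiv h (B.s x)).1 ⟨x, rfl⟩).1, by
    have hs := ((bisimEquiv h (B.s x)).1 ⟨x, rfl⟩).2
    rw [hs, quot_out_out]⟩
  root_eq := rfl
  s_eq := fun x => by
    show Quotient.mk st (B.s _) = _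
    rw [((bisimEquiv h (B.s x)).1 ⟨x, rfl⟩).2, Quotient.out_eq]
  t_eq := fun x => by
    show Quotient.mk st (B.t _) = _
    exact Quotient.sound (Setoid.symm ((bisimEquiv h (B.s x)).2 ⟨x, rfl⟩))

lemma quotHom_e_eq {b : B.V} (x : B.E) (hx : B.s x = b) :
    ((quotHom h).e x).1 = ((bisimEquiv h b).1 ⟨x, hx⟩).1 := by
  subst hx; rfl

lemma quotHom_isCovering : (quotHom h).IsCovering := by
  rw [GraphHom.isCovering_iff]
  constructor
  · exact fun c => ⟨c.out, Quotient.out_eq c⟩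
  · intro b
    constructor
    · rintro ⟨x₁, h₁⟩ ⟨x₂, h₂⟩ hx
      have h3 : ((quotHom h).e x₁).1 = ((quotHom h).e x₂).1 :=
        congrArg Subtype.val (congrArg Subtype.val hx)
      rw [quotHom_e_eq h x₁ h₁, quotHom_e_eq h x₂ h₂] at h3
      have h4 := (bisimEquiv h b).1.injective (Subtype.ext h3)
      exact Subtype.ext (congrArg Subtype.val h4)
    · rintro ⟨⟨y, hy⟩, hsy⟩
      have hsy' : B.s y = (Quotient.mk st b).out := by
        have h5 : Quotient.mk st (B.s y) = Quotient.mk st b := hsy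
        rw [← h5, hy]
      refine ⟨⟨((bisimEquiv h b).1.symm ⟨y, hsy'⟩).1,
        ((bisimEquiv h b).1.symm ⟨y, hsy'⟩).2⟩, ?_⟩
      apply Subtype.ext
      apply Subtype.ext
      show ((quotHom h).e _).1 = y
      rw [quotHom_e_eq h _ ((bisimEquiv h b).1.symm ⟨y, hsy'⟩).2]
      have h6 : (bisimEquiv h b).1 ⟨((bisimEquiv h b).1.symm ⟨y, hsy'⟩).1,
          ((bisimEquiv h b).1.symm ⟨y, hsy'⟩).2⟩ = ⟨y, hsy'⟩ := by
        rw [show (⟨((bisimEquiv h b).1.symm ⟨y, hsy'⟩).1,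
          ((bisimEquiv h b).1.symm ⟨y, hsy'⟩).2⟩ : {e : B.E // B.s e = b}) =
            (bisimEquiv h b).1.symm ⟨y, hsy'⟩ from Subtype.ext rfl]
        exact (bisimEquiv h b).1.apply_symm_apply _
      exact congrArg Subtype.val h6

end QuotGraph

section ConeBisim

variable {B : RGraph}

/-- Transport an isomorphism of cones along their structure. -/
lemma coneIso_step {v w : B.V} (Φ : GraphHom (B.subgraph v) (B.subgraph w))
    (hΦ : Φ.IsIso) {a b : B.V} (ha : B.Reach v a) (hb : B.Reach w b)
    (hab : Φ.v ⟨a, ha⟩ = ⟨b, hb⟩) :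
    RGraph.Iso (B.subgraph a) (B.subgraph b) := by
  have key : ∀ (u : B.V) (hu : B.Reach a u),
      B.Reach b (Φ.v ⟨u, RGraph.reach_trans ha hu⟩).1 := by
    intro u hu
    have h2 := Φ.reach_map (RGraph.reach_subgraph ha hu (RGraph.reach_trans ha hu))
    rw [hab] at h2
    exact RGraph.reach_of_subgraph h2
  have keyE : ∀ (x : B.E) (hx : B.Reach a (B.s x)),
      B.Reach b (B.s (Φ.e ⟨x, RGraph.reach_trans ha hx⟩).1) := by
    intro x hx
    show B.Reach b ((B.subgraph w).s (Φ.e ⟨x, RGraph.reach_trans ha hx⟩)).1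
    rw [Φ.s_eq ⟨x, RGraph.reach_trans ha hx⟩]
    exact key (B.s x) hx
  refine ⟨{ v := fun u => ⟨(Φ.v ⟨u.1, RGraph.reach_trans ha u.2⟩).1, key u.1 u.2⟩
            e := fun x => ⟨(Φ.e ⟨x.1, RGraph.reach_trans ha x.2⟩).1, keyE x.1 x.2⟩
            root_eq := by
              apply Subtype.ext
              have h1 := congrArg Subtype.val hab
              exact h1
            s_eq := fun x => by
              apply Subtype.ext
              have h1 := congrArg Subtype.val (Φ.s_eq ⟨x.1, RGraph.reach_trans ha x.2⟩)
              exact h1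
            t_eq := fun x => by
              apply Subtype.ext
              have h1 := congrArg Subtype.val (Φ.t_eq ⟨x.1, RGraph.reach_trans ha x.2⟩)
              exact h1 },
    ⟨?_, ?_⟩, ⟨?_, ?_⟩⟩
  · -- vertex injective
    rintro u₁ u₂ hu
    have h1 := congrArg Subtype.val hu
    have h1' : Φ.v ⟨u₁.1, RGraph.reach_trans ha u₁.2⟩ =
        Φ.v ⟨u₂.1, RGraph.reach_trans ha u₂.2⟩ := Subtype.ext h1
    have h2 := hΦ.1.1 h1'
    have h3 := congrArg Subtype.val h2
    exact Subtype.ext h3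
  · -- vertex surjective
    rintro ⟨u', hu'⟩
    have hwu' : B.Reach w u' := RGraph.reach_trans hb hu'
    have h1 : (B.subgraph w).Reach ⟨b, hb⟩ ⟨u', hwu'⟩ :=
      RGraph.reach_subgraph hb hu' hwu'
    obtain ⟨z, hz⟩ := hΦ.1.2 ⟨u', hwu'⟩
    rw [← hz, ← hab] at h1
    have h3 : B.Reach a z.1 := RGraph.reach_of_subgraph (hΦ.reach_reflect h1)
    refine ⟨⟨z.1, h3⟩, Subtype.ext ?_⟩
    show (Φ.v ⟨z.1, RGraph.reach_trans ha h3⟩).1 = u'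
    rw [show (⟨z.1, RGraph.reach_trans ha h3⟩ : (B.subgraph v).V) = z from Subtype.ext rfl,
      hz]
  · -- edge injective
    rintro x₁ x₂ hx
    have h1 := congrArg Subtype.val hx
    have h1' : Φ.e ⟨x₁.1, RGraph.reach_trans ha x₁.2⟩ =
        Φ.e ⟨x₂.1, RGraph.reach_trans ha x₂.2⟩ := Subtype.ext h1
    have h2 := hΦ.2.1 h1'
    have h3 := congrArg Subtype.val h2
    exact Subtype.ext h3
  · -- edge surjective
    rintro ⟨y, hy⟩
    have hwy : B.Reach w (B.s y) := RGraph.reach_trans hb hy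
    obtain ⟨x, hx⟩ := hΦ.2.2 ⟨y, hwy⟩
    have hs := Φ.s_eq x
    rw [hx] at hs
    have h1 : (B.subgraph w).Reach ⟨b, hb⟩ ((B.subgraph w).s ⟨y, hwy⟩) :=
      RGraph.reach_subgraph hb hy hwy
    rw [hs, ← hab] at h1
    have h3 : B.Reach a (B.s x.1) := RGraph.reach_of_subgraph (hΦ.reach_reflect h1)
    refine ⟨⟨x.1, h3⟩, Subtype.ext ?_⟩
    show (Φ.e ⟨x.1, RGraph.reach_trans ha h3⟩).1 = y
    rw [show (⟨x.1, RGraph.reach_trans ha h3⟩ : (B.subgraph v).E) = x from Subtype.ext rfl,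
      hx]

/-- The cone-isomorphism relation is a bisimulation. -/
lemma isBisim_coneIso (B : RGraph) :
    IsBisim B (fun v w => RGraph.Iso (B.subgraph v) (B.subgraph w)) := by
  rintro v w ⟨Φ, hΦ⟩
  have hsrc : ∀ x : (B.subgraph v).E, (B.subgraph v).s x = (B.subgraph v).root →
      B.s (Φ.e x).1 = w := by
    intro x hx
    have h1 := Φ.s_eq x
    rw [hx, Φ.root_eq] at h1
    have h2 := congrArg Subtype.val h1
    exact h2
  let F : {e : B.E // B.s e = v} → {e : B.E // B.s e = w} :=
    fun e => ⟨(Φ.e ⟨e.1, RGraph.reach_of_eq e.2.symm⟩).1,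
      hsrc ⟨e.1, RGraph.reach_of_eq e.2.symm⟩ (Subtype.ext e.2)⟩
  have Finj : Function.Injective F := by
    rintro e₁ e₂ he
    have h1 := congrArg Subtype.val he
    have h1' : Φ.e ⟨e₁.1, RGraph.reach_of_eq e₁.2.symm⟩ =
        Φ.e ⟨e₂.1, RGraph.reach_of_eq e₂.2.symm⟩ := Subtype.ext h1
    have h2 := hΦ.2.1 h1'
    have h3 := congrArg Subtype.val h2
    exact Subtype.ext h3
  have Fsurj : Function.Surjective F := by
    rintro ⟨y, hy⟩
    have hwy : B.Reach w (B.s y) := RGraph.reach_of_eq hy.symm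
    obtain ⟨x, hx⟩ := hΦ.2.2 ⟨y, hwy⟩
    have hsx : B.s x.1 = v := by
      have h1 := Φ.s_eq x
      rw [hx] at h1
      have h2 : (B.subgraph w).s ⟨y, hwy⟩ = (B.subgraph w).root := Subtype.ext hy
      rw [h2, ← Φ.root_eq] at h1
      have h3 := hΦ.1.1 h1.symm
      have h4 := congrArg Subtype.val h3
      exact h4
    refine ⟨⟨x.1, hsx⟩, Subtype.ext ?_⟩
    show (Φ.e ⟨x.1, RGraph.reach_of_eq hsx.symm⟩).1 = y
    rw [show (⟨x.1, RGraph.reach_of_eq hsx.symm⟩ : (B.subgraph v).E) = x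
      from Subtype.ext rfl, hx]
  refine ⟨Equiv.ofBijective F ⟨Finj, Fsurj⟩, ?_⟩
  intro e
  have hbe : B.s (F e).1 = w := (F e).2
  refine coneIso_step Φ hΦ (B.reach_target (RGraph.reach_of_eq e.2.symm))
    (b := B.t (F e).1) (B.reach_target (RGraph.reach_of_eq hbe.symm)) ?_
  exact (Φ.t_eq ⟨e.1, RGraph.reach_of_eq e.2.symm⟩).symm

end ConeBisim

/-- The pairing of two locally bijective morphisms is a bisimulation downstairs. -/
lemma isBisim_two_coverings {T C : RGraph} (f g : GraphHom T C)
    (hf : f.LocBij) (hg : g.LocBij) :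
    IsBisim C (fun b b' => ∃ x : T.V, f.v x = b ∧ g.v x = b') := by
  rintro b b' ⟨x, rfl, rfl⟩
  refine ⟨(Equiv.ofBijective _ (hf x)).symm.trans (Equiv.ofBijective _ (hg x)), ?_⟩
  intro e
  refine ⟨T.t ((Equiv.ofBijective _ (hf x)).symm e).1, ?_, ?_⟩
  · have h1 : f.outMap x ((Equiv.ofBijective _ (hf x)).symm e) = e :=
      (Equiv.ofBijective _ (hf x)).apply_symm_apply e
    have h2 : f.e ((Equiv.ofBijective _ (hf x)).symm e).1 = e.1 :=
      congrArg Subtype.val h1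
    rw [← h2]
    exact (f.t_eq _).symm
  · exact (g.t_eq _).symm

/-- The universal covering morphism is a covering when the base is connected. -/
lemma uCover_isCovering (A : RGraph) (hconn : A.Connected) : A.uCover.IsCovering := by
  rw [GraphHom.isCovering_iff]
  constructor
  · intro q
    obtain ⟨l, hl, ht⟩ := hconn q
    exact ⟨⟨l, hl⟩, ht⟩
  · intro x
    constructor
    · rintro ⟨e₁, h₁⟩ ⟨e₂, h₂⟩ he
      apply Subtype.ext
      apply Subtype.ext
      apply Prod.ext
      · exact h₁.trans h₂.symm
      · exact congrArg Subtype.val he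
    · rintro ⟨a, haa⟩
      exact ⟨⟨⟨(x, a), haa⟩, rfl⟩, rfl⟩

/-- Let `A` be a connected locally finite graph whose universal
covering tree is a self-similar tree, and let `Ā` be a minimal covering quotient of
this tree. Any two covering morphisms `π, π' : A → Ā` agree on vertices. -/
theorem stmt10 (A : RGraph) (hconn : A.Connected) (hlf : A.LocallyFinite)
    (hss : SelfSimilarTree A.cover) (Abar : RGraph)
    (hmin : IsMinCovQuotient A.cover Abar)
    (p p' : GraphHom A Abar) (hp : p.IsCovering) (hp' : p'.IsCovering) :
    p.v = p'.v := by
  classical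
  have hu : (A.uCover).IsCovering := uCover_isCovering A hconn
  set f := p.comp A.uCover with hfdef
  set g := p'.comp A.uCover with hgdef
  have hf : f.IsCovering := GraphHom.comp_isCovering hp hu
  have hg : g.IsCovering := GraphHom.comp_isCovering hp' hu
  -- Step 1: `Abar.V` is finite, via the cone-type quotient of the covering tree.
  obtain ⟨S, hSfin, hScone⟩ := hss.2.2
  let stc : Setoid A.cover.V := Relation.EqvGen.setoid
    (fun v w => RGraph.Iso (A.cover.subgraph v) (A.cover.subgraph w))
  have hbisimc : IsBisim A.cover stc.r := isBisim_eqvGen (isBisim_coneIso A.cover)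
  have hQc : IsCovQuotient A.cover (quotGraph A.cover stc) :=
    ⟨quotHom hbisimc, quotHom_isCovering hbisimc⟩
  haveI hSfin' : Finite S := hSfin.to_subtype
  have hQcfin : Finite (Quotient stc) := by
    refine Finite.of_surjective (fun x : S => (Quotient.mk stc x.1 : Quotient stc)) ?_
    intro c
    obtain ⟨v, rfl⟩ := Quotient.exists_rep c
    obtain ⟨w, hwS, hiso⟩ := hScone v
    exact ⟨⟨w, hwS⟩,
      Quotient.sound (Relation.EqvGen.symm _ _ (Relation.EqvGen.rel v w hiso))⟩
  haveI hAbarfin : Finite Abar.V := by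
    have h1 : Cardinal.mk Abar.V ≤ Cardinal.mk (Quotient stc) :=
      hmin.2 (quotGraph A.cover stc) hQc
    have h2 : Cardinal.mk (Quotient stc) < Cardinal.aleph0 :=
      Cardinal.lt_aleph0_iff_finite.mpr hQcfin
    exact Cardinal.lt_aleph0_iff_finite.mp (lt_of_le_of_lt h1 h2)
  -- Step 2: quotient `Abar` by the equivalence generated by the pairing of `f` and `g`.
  let st0 : Setoid Abar.V := Relation.EqvGen.setoid
    (fun b b' => ∃ x : A.cover.V, f.v x = b ∧ g.v x = b')
  have hb0 : IsBisim Abar st0.r :=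
    isBisim_eqvGen (isBisim_two_coverings f g
      (GraphHom.isCovering_iff.mp hf).2 (GraphHom.isCovering_iff.mp hg).2)
  have hQ0 : IsCovQuotient A.cover (quotGraph Abar st0) :=
    ⟨(quotHom hb0).comp f, GraphHom.comp_isCovering (quotHom_isCovering hb0) hf⟩
  have hcard : Cardinal.mk Abar.V ≤ Cardinal.mk (Quotient st0) :=
    hmin.2 (quotGraph Abar st0) hQ0
  have hsurj : Function.Surjective (Quotient.mk st0) :=
    fun c => ⟨c.out, Quotient.out_eq c⟩
  haveI hfinQ : Finite (Quotient st0) := Quotient.finite _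
  have hle1 : Nat.card (Quotient st0) ≤ Nat.card Abar.V :=
    Nat.card_le_card_of_surjective _ hsurj
  have hle2 : Nat.card Abar.V ≤ Nat.card (Quotient st0) := by
    obtain ⟨emb⟩ : Nonempty (Abar.V ↪ Quotient st0) := hcard
    exact Nat.card_le_card_of_injective emb emb.injective
  have hinj : Function.Injective (Quotient.mk st0) :=
    ((Nat.bijective_iff_surjective_and_card (Quotient.mk st0)).mpr
      ⟨hsurj, le_antisymm hle2 hle1⟩).1
  -- Step 3: conclude.
  funext q
  obtain ⟨l, hl, ht⟩ := hconn q
  have hr : st0.r (f.v ⟨l, hl⟩) (g.v ⟨l, hl⟩) :=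
    Relation.EqvGen.rel _ _ ⟨⟨l, hl⟩, rfl, rfl⟩
  have heq : f.v ⟨l, hl⟩ = g.v ⟨l, hl⟩ := hinj (Quotient.sound hr)
  show p.v q = p'.v q
  rw [← ht]
  exact heq
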